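/- arXiv:1703.05038 — 2 statements merged into one kernel-verified Lean document; each statement's English description precedes it below -/
import Mathlib

section
/- For a full-rank square matrix X of size d×d and 0 < p ≤ 2, ‖X‖_{S_p}^p = (1/2)(‖W_L^{1/2} X‖_F^2 + ‖X W_R^{1/2}‖_F^2), where W_L = (X X*)^{(p-2)/2} and W_R = (X* X)^{(p-2)/2}. That is, the Schatten-p power is the weighted ℓ₂-norm squared of the vectorization of X with weight matrix equal to the arithmetic mean (I ⊗ W_L + W_R ⊗ I)/2. -/
open scoped BigOperators Kronecker
open Matrix

noncomputable def sv {d₁ d₂ : ℕ} (X : Matrix (Fin d₁) (Fin d₂) ℂ) (i : Fin d₂) : ℝ :=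
  Real.sqrt ((Matrix.isHermitian_conjTranspose_mul_self X).eigenvalues i)

noncomputable def svDesc {d₁ d₂ : ℕ} (X : Matrix (Fin d₁) (Fin d₂) ℂ) (i : Fin d₂) : ℝ :=
  (sv X ∘ Tuple.sort (sv X)) i.rev

noncomputable def hermPow {d : ℕ} {A : Matrix (Fin d) (Fin d) ℂ} (hA : A.IsHermitian) (r : ℝ) :
    Matrix (Fin d) (Fin d) ℂ :=
  (hA.eigenvectorUnitary : Matrix (Fin d) (Fin d) ℂ) *
    Matrix.diagonal (fun i => ((hA.eigenvalues i ^ r : ℝ) : ℂ)) *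
    star (hA.eigenvectorUnitary : Matrix (Fin d) (Fin d) ℂ)

noncomputable def frobSq {d₁ d₂ : ℕ} (X : Matrix (Fin d₁) (Fin d₂) ℂ) : ℝ :=
  (Matrix.trace (Xᴴ * X)).re

def ksum {d₁ d₂ : ℕ} (A : Matrix (Fin d₁) (Fin d₁) ℂ) (B : Matrix (Fin d₂) (Fin d₂) ℂ) :
    Matrix (Fin d₂ × Fin d₁) (Fin d₂ × Fin d₁) ℂ :=
  (1 : Matrix (Fin d₂) (Fin d₂) ℂ) ⊗ₖ A + B ⊗ₖ (1 : Matrix (Fin d₁) (Fin d₁) ℂ)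

def vec {d₁ d₂ : ℕ} (X : Matrix (Fin d₁) (Fin d₂) ℂ) : Fin d₂ × Fin d₁ → ℂ :=
  fun ji => X ji.2 ji.1


section Aux
variable {d : ℕ}

/-- Intertwining: `f(XXᴴ) X = X f(XᴴX)`. -/
lemma hermPow_mul_left_eq (X : Matrix (Fin d) (Fin d) ℂ) (r : ℝ) :
    hermPow (Matrix.isHermitian_mul_conjTranspose_self X) r * X =
      X * hermPow (Matrix.isHermitian_conjTranspose_mul_self X) r := by
  set hL := Matrix.isHermitian_mul_conjTranspose_self X with hhL
  set hR := Matrix.isHermitian_conjTranspose_mul_self X with hhR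
  set U : Matrix (Fin d) (Fin d) ℂ := (hL.eigenvectorUnitary : Matrix (Fin d) (Fin d) ℂ) with hU
  set V : Matrix (Fin d) (Fin d) ℂ := (hR.eigenvectorUnitary : Matrix (Fin d) (Fin d) ℂ) with hV
  have hU1 : star U * U = 1 := Unitary.coe_star_mul_self hL.eigenvectorUnitary
  have hU2 : U * star U = 1 := Unitary.coe_mul_star_self hL.eigenvectorUnitary
  have hV1 : star V * V = 1 := Unitary.coe_star_mul_self hR.eigenvectorUnitary
  have hV2 : V * star V = 1 := Unitary.coe_mul_star_self hR.eigenvectorUnitary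
  have cU : ∀ Z : Matrix (Fin d) (Fin d) ℂ, U * (star U * Z) = Z := fun Z => by
    rw [← Matrix.mul_assoc, hU2, Matrix.one_mul]
  have cV : ∀ Z : Matrix (Fin d) (Fin d) ℂ, V * (star V * Z) = Z := fun Z => by
    rw [← Matrix.mul_assoc, hV2, Matrix.one_mul]
  set M : Matrix (Fin d) (Fin d) ℂ := star U * X * V with hM
  have h1 : star U * (X * Xᴴ) * U = Matrix.diagonal (RCLike.ofReal ∘ hL.eigenvalues) :=
    by have := hL.conjStarAlgAut_star_eigenvectorUnitary; rwa [Unitary.conjStarAlgAut_star_apply] at this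
  have h2 : star V * (Xᴴ * X) * V = Matrix.diagonal (RCLike.ofReal ∘ hR.eigenvalues) :=
    by have := hR.conjStarAlgAut_star_eigenvectorUnitary; rwa [Unitary.conjStarAlgAut_star_apply] at this
  have hcomm : Matrix.diagonal (RCLike.ofReal ∘ hL.eigenvalues) * M =
      M * Matrix.diagonal (RCLike.ofReal ∘ hR.eigenvalues) := by
    rw [← h1, ← h2, hM]
    simp only [Matrix.mul_assoc, cU, cV]
  have hent : ∀ i j,
      ((hL.eigenvalues i ^ r : ℝ) : ℂ) * M i j = M i j * ((hR.eigenvalues j ^ r : ℝ) : ℂ) := by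
    intro i j
    have h' : ((hL.eigenvalues i : ℝ) : ℂ) * M i j = M i j * ((hR.eigenvalues j : ℝ) : ℂ) := by
      simpa [Matrix.diagonal_mul, Matrix.mul_diagonal, Function.comp] using
        congrFun (congrFun hcomm i) j
    by_cases hz : M i j = 0
    · simp [hz]
    · have hc : ((hL.eigenvalues i : ℝ) : ℂ) = ((hR.eigenvalues j : ℝ) : ℂ) := by
        rw [mul_comm (M i j) _] at h'
        exact mul_right_cancel₀ hz h'
      have heq : hL.eigenvalues i = hR.eigenvalues j := by exact_mod_cast hc
      rw [heq, mul_comm]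
  have key : Matrix.diagonal (fun i => ((hL.eigenvalues i ^ r : ℝ) : ℂ)) * M =
      M * Matrix.diagonal (fun j => ((hR.eigenvalues j ^ r : ℝ) : ℂ)) := by
    ext i j
    simp only [Matrix.diagonal_mul, Matrix.mul_diagonal]
    exact hent i j
  have hMV : M * star V = star U * X := by
    rw [hM]
    simp only [Matrix.mul_assoc, hV2, Matrix.mul_one]
  have hUM : U * M = X * V := by
    rw [hM]
    simp only [Matrix.mul_assoc, cU]
  calc hermPow hL r * X
      = U * Matrix.diagonal (fun i => ((hL.eigenvalues i ^ r : ℝ) : ℂ)) * (M * star V) := by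
        rw [hMV]; simp only [hermPow, Matrix.mul_assoc]; rfl
    _ = U * (Matrix.diagonal (fun i => ((hL.eigenvalues i ^ r : ℝ) : ℂ)) * M) * star V := by
        simp only [Matrix.mul_assoc]
    _ = U * (M * Matrix.diagonal (fun j => ((hR.eigenvalues j ^ r : ℝ) : ℂ))) * star V := by
        rw [key]
    _ = (U * M) * Matrix.diagonal (fun j => ((hR.eigenvalues j ^ r : ℝ) : ℂ)) * star V := by
        simp only [Matrix.mul_assoc]
    _ = X * hermPow hR r := by
        rw [hUM]; simp only [hermPow, Matrix.mul_assoc]; rfl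

/-- Spectral computation of the Frobenius norm of `X f(XᴴX)`. -/
lemma frobSq_mul_hermPow (X : Matrix (Fin d) (Fin d) ℂ) (r : ℝ) :
    frobSq (X * hermPow (Matrix.isHermitian_conjTranspose_mul_self X) r) =
      ∑ i, ((Matrix.isHermitian_conjTranspose_mul_self X).eigenvalues i ^ r *
        ((Matrix.isHermitian_conjTranspose_mul_self X).eigenvalues i *
          (Matrix.isHermitian_conjTranspose_mul_self X).eigenvalues i ^ r)) := by
  set hR := Matrix.isHermitian_conjTranspose_mul_self X with hhR
  set V : Matrix (Fin d) (Fin d) ℂ := (hR.eigenvectorUnitary : Matrix (Fin d) (Fin d) ℂ) with hV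
  have hV1 : star V * V = 1 := Unitary.coe_star_mul_self hR.eigenvectorUnitary
  have cV' : ∀ Z : Matrix (Fin d) (Fin d) ℂ, star V * (V * Z) = Z := fun Z => by
    rw [← Matrix.mul_assoc, hV1, Matrix.one_mul]
  set Df : Matrix (Fin d) (Fin d) ℂ :=
    Matrix.diagonal (fun i => ((hR.eigenvalues i ^ r : ℝ) : ℂ)) with hDf
  set DR : Matrix (Fin d) (Fin d) ℂ :=
    Matrix.diagonal (RCLike.ofReal ∘ hR.eigenvalues) with hDR
  have hQ : hermPow hR r = V * Df * star V := rfl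
  have hDfH : Dfᴴ = Df := by
    ext i j
    rw [hDf, Matrix.conjTranspose_apply]
    by_cases h : i = j
    · subst h; simp [Matrix.diagonal_apply_eq, Complex.conj_ofReal]
    · simp [Matrix.diagonal_apply_ne, h, Ne.symm h]
  have hQH : (hermPow hR r)ᴴ = hermPow hR r := by
    simp only [hQ, Matrix.conjTranspose_mul, Matrix.star_eq_conjTranspose,
      Matrix.conjTranspose_conjTranspose, hDfH, Matrix.mul_assoc]
  have e1 : (X * hermPow hR r)ᴴ * (X * hermPow hR r)
      = hermPow hR r * (Xᴴ * X) * hermPow hR r := by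
    rw [Matrix.conjTranspose_mul, hQH]
    simp only [Matrix.mul_assoc]
  have e2 : hermPow hR r * (Xᴴ * X) * hermPow hR r
      = V * (Df * (DR * (Df * star V))) := by
    conv_lhs => rw [hQ, hR.spectral_theorem, Unitary.conjStarAlgAut_apply, ← hV, ← hDR]
    simp only [Matrix.mul_assoc, cV']
  have e3 : Matrix.trace ((X * hermPow hR r)ᴴ * (X * hermPow hR r))
      = Matrix.trace (Df * (DR * Df)) := by
    rw [e1, e2, Matrix.trace_mul_comm]
    simp only [Matrix.mul_assoc, hV1, Matrix.mul_one]
  rw [frobSq, e3, hDf, hDR]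
  simp only [Matrix.diagonal_mul_diagonal, Matrix.trace_diagonal]
  rw [Complex.re_sum]
  refine Finset.sum_congr rfl fun i _ => ?_
  simp [Function.comp, ← Complex.ofReal_mul]

end Aux

lemma scalar_eq (μ : ℝ) (hμ : 0 ≤ μ) (p : ℝ) (hp0 : 0 < p) :
    μ ^ ((p - 2) / 4) * (μ * μ ^ ((p - 2) / 4)) = Real.sqrt μ ^ p := by
  rw [Real.sqrt_eq_rpow, ← Real.rpow_mul hμ]
  rcases hμ.eq_or_lt with h | h
  · rw [← h, Real.zero_rpow (by positivity : (1 / 2 : ℝ) * p ≠ 0)]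
    simp
  · have e : μ ^ ((p - 2) / 4) * (μ * μ ^ ((p - 2) / 4)) =
        μ ^ ((p - 2) / 4 + (1 + (p - 2) / 4)) := by
      rw [Real.rpow_add h, Real.rpow_add h, Real.rpow_one]
    rw [e]
    congr 1
    ring


/-- arithmetic mean of the one-sided weights:
`‖X‖_{S_p}^p = (1/2)(‖W_L^{1/2} X‖_F² + ‖X W_R^{1/2}‖_F²)` for full-rank square `X`,
where `W_L = (X Xᴴ)^{(p-2)/2}` and `W_R = (Xᴴ X)^{(p-2)/2}`. -/
theorem stmt1 {d : ℕ} (X : Matrix (Fin d) (Fin d) ℂ) (hX : IsUnit X.det)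
    (p : ℝ) (hp0 : 0 < p) (hp2 : p ≤ 2) :
    (∑ i, sv X i ^ p) =
      (1 / 2) *
        (frobSq (hermPow (Matrix.isHermitian_mul_conjTranspose_self X) ((p - 2) / 4) * X) +
         frobSq (X * hermPow (Matrix.isHermitian_conjTranspose_mul_self X) ((p - 2) / 4))) := by
  rw [hermPow_mul_left_eq, frobSq_mul_hermPow]
  have h2 : ∀ s : ℝ, (1 / 2) * (s + s) = s := fun s => by ring
  rw [h2]
  refine Finset.sum_congr rfl fun i _ => ?_
  exact (scalar_eq _ (Matrix.eigenvalues_conjTranspose_mul_self_nonneg X i) p hp0).symm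
end

section
/- Rank-2r splitting bound: let X^{(n)} have SVD with left/right singular vector matrices split as U = (U_T, U_{T_c}) and V = (V_T, V_{T_c}) where U_T, V_T contain the first r singular vectors. Then for any matrix η, the best rank-2r approximation η_{2r} of η satisfies ‖η − η_{2r}‖_{S_p} ≤ ‖U_{T_c}* η V_{T_c}‖_{S_p} for every 0 < p ≤ 1. -/
open scoped BigOperators Kronecker ComplexOrder
open Matrix
open Polynomial

lemma myCharpolyDiagonal {n : ℕ} (v : Fin n → ℂ) :
    (Matrix.diagonal v).charpoly = ∏ i, (X - C (v i)) := by
  have h : charmatrix (Matrix.diagonal v) =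
      Matrix.diagonal (fun i => (X : ℂ[X]) - C (v i)) := by
    ext i j
    by_cases h : i = j
    · subst h; simp
    · simp [h, Matrix.diagonal_apply_ne _ h]
  rw [Matrix.charpoly, h, Matrix.det_diagonal]

lemma myCharpolyConj {n : ℕ} (T A : Matrix (Fin n) (Fin n) ℂ)
    (hT : Tᴴ * T = 1) : (T * A * Tᴴ).charpoly = A.charpoly := by
  have hT' : T * Tᴴ = 1 := mul_eq_one_comm.mpr hT
  have hmap : T.map (C : ℂ →+* ℂ[X]) * Tᴴ.map (C : ℂ →+* ℂ[X]) = 1 := by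
    rw [← Matrix.map_mul, hT', Matrix.map_one _ (map_zero C) (map_one C)]
  have hc : charmatrix (T * A * Tᴴ) =
      (T.map C) * charmatrix A * (Tᴴ.map C) := by
    rw [charmatrix, charmatrix, Matrix.mul_sub, Matrix.sub_mul]
    congr 1
    · rw [Matrix.scalar_apply, ← Matrix.smul_one_eq_diagonal, mul_smul_comm,
        smul_mul_assoc, mul_one, hmap]
    · simp [RingHom.mapMatrix_apply, Matrix.map_mul]
  rw [Matrix.charpoly, Matrix.charpoly, hc, Matrix.det_mul, Matrix.det_mul]
  rw [mul_comm (T.map C).det, mul_assoc, ← Matrix.det_mul, hmap, Matrix.det_one, mul_one]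

lemma myEigMultiset {n : ℕ} {A : Matrix (Fin n) (Fin n) ℂ} (hA : A.IsHermitian)
    (T : Matrix (Fin n) (Fin n) ℂ) (hT : Tᴴ * T = 1) (g : Fin n → ℝ)
    (hAeq : A = T * Matrix.diagonal (fun i => (g i : ℂ)) * Tᴴ) :
    Multiset.map hA.eigenvalues Finset.univ.val = Multiset.map g Finset.univ.val := by
  have hW : (star (hA.eigenvectorUnitary : Matrix (Fin n) (Fin n) ℂ)) *
      (hA.eigenvectorUnitary : Matrix (Fin n) (Fin n) ℂ) = 1 := by
    have := Matrix.mem_unitaryGroup_iff.mp (hA.eigenvectorUnitary).2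
    exact mul_eq_one_comm.mp this
  have h1 : A.charpoly = ∏ i, (X - C ((hA.eigenvalues i : ℂ))) := by
    conv_lhs => rw [hA.spectral_theorem]
    simp only [Unitary.conjStarAlgAut_apply, Unitary.coe_star]
    rw [Matrix.star_eq_conjTranspose] at hW ⊢
    rw [myCharpolyConj _ _ hW, myCharpolyDiagonal]
    rfl
  have h2 : A.charpoly = ∏ i, (X - C ((g i : ℂ))) := by
    conv_lhs => rw [hAeq]
    rw [myCharpolyConj _ _ hT, myCharpolyDiagonal]
  have h3 : (Multiset.map (fun i => ((hA.eigenvalues i : ℂ))) Finset.univ.val) =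
      Multiset.map (fun i => ((g i : ℂ))) Finset.univ.val := by
    have r1 := congrArg Polynomial.roots h1
    have r2 := congrArg Polynomial.roots h2
    rw [Finset.prod_eq_multiset_prod] at r1 r2
    have e1 : (Multiset.map (fun i => X - C ((hA.eigenvalues i : ℂ))) Finset.univ.val)
        = Multiset.map (fun a => X - C a)
            (Multiset.map (fun i => ((hA.eigenvalues i : ℂ))) Finset.univ.val) := by
      rw [Multiset.map_map]; rfl
    have e2 : (Multiset.map (fun i => X - C ((g i : ℂ))) Finset.univ.val)
        = Multiset.map (fun a => X - C a)
            (Multiset.map (fun i => ((g i : ℂ))) Finset.univ.val) := by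
      rw [Multiset.map_map]; rfl
    rw [e1, Polynomial.roots_multiset_prod_X_sub_C] at r1
    rw [e2, Polynomial.roots_multiset_prod_X_sub_C] at r2
    rw [← r1, ← r2]
  have : Multiset.map (Complex.ofReal) (Multiset.map hA.eigenvalues Finset.univ.val)
      = Multiset.map (Complex.ofReal) (Multiset.map g Finset.univ.val) := by
    rw [Multiset.map_map, Multiset.map_map]
    exact h3
  exact Multiset.map_injective Complex.ofReal_injective this

lemma mySumEq {n : ℕ} (a b : Fin n → ℝ) (f : ℝ → ℝ)
    (h : Multiset.map a Finset.univ.val = Multiset.map b Finset.univ.val) :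
    ∑ i, f (a i) = ∑ i, f (b i) := by
  rw [Finset.sum_eq_multiset_sum, Finset.sum_eq_multiset_sum]
  have : Multiset.map (f ∘ a) Finset.univ.val = Multiset.map (f ∘ b) Finset.univ.val := by
    rw [← Multiset.map_map f a, ← Multiset.map_map f b, h]
  simpa using congrArg Multiset.sum this

lemma myRankAddLe {m n : ℕ} (A B : Matrix (Fin m) (Fin n) ℂ) :
    (A + B).rank ≤ A.rank + B.rank := by
  simp only [Matrix.rank]
  have hr : LinearMap.range (A + B).mulVecLin ≤
      LinearMap.range A.mulVecLin ⊔ LinearMap.range B.mulVecLin := by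
    rintro x ⟨y, rfl⟩
    rw [Matrix.mulVecLin_add]
    exact Submodule.add_mem_sup ⟨y, rfl⟩ ⟨y, rfl⟩
  exact le_trans (Submodule.finrank_mono hr)
    (Submodule.finrank_add_le_finrank_add_finrank _ _)

/-- rank-2r splitting bound: for unitary U = (U_T, U_{T_c}), V = (V_T, V_{T_c})
(first r columns vs. the rest), any best rank-2r approximation η_{2r} of η in Schatten-p
satisfies ‖η − η_{2r}‖_{S_p} ≤ ‖U_{T_c}ᴴ η V_{T_c}‖_{S_p} (equivalently for p-th powers). -/
theorem stmt15 {d₁ d₂ r : ℕ} (p : ℝ) (hp0 : 0 < p) (hp1 : p ≤ 1)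
    (hr1 : r ≤ d₁) (hr2 : r ≤ d₂)
    (U : Matrix (Fin d₁) (Fin d₁) ℂ) (V : Matrix (Fin d₂) (Fin d₂) ℂ)
    (hU : Uᴴ * U = 1) (hV : Vᴴ * V = 1)
    (η η2r : Matrix (Fin d₁) (Fin d₂) ℂ)
    (hrank : η2r.rank ≤ 2 * r)
    (hbest : ∀ B : Matrix (Fin d₁) (Fin d₂) ℂ, B.rank ≤ 2 * r →
      (∑ i, sv (η - η2r) i ^ p) ≤ ∑ i, sv (η - B) i ^ p) :
    (∑ i, sv (η - η2r) i ^ p) ≤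
      ∑ i, sv
        ((Matrix.of (fun i (j : Fin (d₁ - r)) =>
              U i (⟨r + (j : ℕ), by have := j.isLt; omega⟩ : Fin d₁)))ᴴ * η *
          Matrix.of (fun i (j : Fin (d₂ - r)) =>
              V i (⟨r + (j : ℕ), by have := j.isLt; omega⟩ : Fin d₂))) i ^ p := by
  classical
  have hd1 : r + (d₁ - r) = d₁ := by omega
  have hd2 : r + (d₂ - r) = d₂ := by omega
  set e₁ : Fin r ⊕ Fin (d₁ - r) ≃ Fin d₁ := finSumFinEquiv.trans (finCongr hd1) with he₁
  set e₂ : Fin r ⊕ Fin (d₂ - r) ≃ Fin d₂ := finSumFinEquiv.trans (finCongr hd2) with he₂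
  set U₀ : Matrix (Fin d₁) (Fin r) ℂ := U.submatrix id (fun j => e₁ (Sum.inl j)) with hU₀
  set U₁ : Matrix (Fin d₁) (Fin (d₁ - r)) ℂ := U.submatrix id (fun j => e₁ (Sum.inr j)) with hU₁
  set V₀ : Matrix (Fin d₂) (Fin r) ℂ := V.submatrix id (fun j => e₂ (Sum.inl j)) with hV₀
  set V₁ : Matrix (Fin d₂) (Fin (d₂ - r)) ℂ := V.submatrix id (fun j => e₂ (Sum.inr j)) with hV₁
  -- basic identities
  have hUcols : U.submatrix id ⇑e₁ = fromCols U₀ U₁ := by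
    ext i j; cases j <;> rfl
  have hVcols : V.submatrix id ⇑e₂ = fromCols V₀ V₁ := by
    ext i j; cases j <;> rfl
  have hUU : U * Uᴴ = 1 := mul_eq_one_comm.mp hU
  have hVV : V * Vᴴ = 1 := mul_eq_one_comm.mp hV
  have hUsplit : U₀ * U₀ᴴ + U₁ * U₁ᴴ = 1 := by
    have h := Matrix.submatrix_mul_equiv U Uᴴ id e₁ id
    rw [hUU, Matrix.submatrix_id_id] at h
    rw [← Matrix.fromCols_mul_fromRows, ← conjTranspose_fromCols_eq_fromRows_conjTranspose,
      ← hUcols, Matrix.conjTranspose_submatrix]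
    exact h
  have hVsplit : V₀ * V₀ᴴ + V₁ * V₁ᴴ = 1 := by
    have h := Matrix.submatrix_mul_equiv V Vᴴ id e₂ id
    rw [hVV, Matrix.submatrix_id_id] at h
    rw [← Matrix.fromCols_mul_fromRows, ← conjTranspose_fromCols_eq_fromRows_conjTranspose,
      ← hVcols, Matrix.conjTranspose_submatrix]
    exact h
  have hU₁unit : U₁ᴴ * U₁ = 1 := by
    have h := Matrix.submatrix_mul_equiv Uᴴ U e₁ (Equiv.refl (Fin d₁)) e₁
    simp only [Equiv.coe_refl, Matrix.submatrix_id_id] at h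
    rw [hU, Matrix.submatrix_one_equiv] at h
    have h2 : (fromCols U₀ U₁)ᴴ * fromCols U₀ U₁ = 1 := by
      rw [← hUcols, Matrix.conjTranspose_submatrix]
      exact h
    rw [conjTranspose_fromCols_eq_fromRows_conjTranspose,
      Matrix.fromRows_mul_fromCols] at h2
    have h3 := congrArg Matrix.toBlocks₂₂ h2
    rw [Matrix.toBlocks_fromBlocks₂₂] at h3
    rw [h3]
    ext i j
    simp [Matrix.toBlocks₂₂, Matrix.one_apply]
  have hV₁unit : V₁ᴴ * V₁ = 1 := by
    have h := Matrix.submatrix_mul_equiv Vᴴ V e₂ (Equiv.refl (Fin d₂)) e₂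
    simp only [Equiv.coe_refl, Matrix.submatrix_id_id] at h
    rw [hV, Matrix.submatrix_one_equiv] at h
    have h2 : (fromCols V₀ V₁)ᴴ * fromCols V₀ V₁ = 1 := by
      rw [← hVcols, Matrix.conjTranspose_submatrix]
      exact h
    rw [conjTranspose_fromCols_eq_fromRows_conjTranspose,
      Matrix.fromRows_mul_fromCols] at h2
    have h3 := congrArg Matrix.toBlocks₂₂ h2
    rw [Matrix.toBlocks_fromBlocks₂₂] at h3
    rw [h3]
    ext i j
    simp [Matrix.toBlocks₂₂, Matrix.one_apply]
  -- the competitor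
  set M : Matrix (Fin (d₁ - r)) (Fin (d₂ - r)) ℂ := U₁ᴴ * η * V₁ with hM
  set B : Matrix (Fin d₁) (Fin d₂) ℂ := η - U₁ * (U₁ᴴ * η * V₁ * V₁ᴴ) with hBdef
  have hXeq : η - B = U₁ * (M * V₁ᴴ) := by
    rw [hBdef, sub_sub_cancel, hM, Matrix.mul_assoc]
  -- rank bound
  have hBsplit : B = U₀ * U₀ᴴ * η + U₁ * U₁ᴴ * η * (V₀ * V₀ᴴ) := by
    have e1 : U₀ * U₀ᴴ = 1 - U₁ * U₁ᴴ := by rw [← hUsplit]; abel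
    have e2 : V₀ * V₀ᴴ = 1 - V₁ * V₁ᴴ := by rw [← hVsplit]; abel
    rw [hBdef, ← Matrix.mul_assoc, e1, e2]
    simp only [Matrix.sub_mul, Matrix.mul_sub, Matrix.one_mul, Matrix.mul_one, ← Matrix.mul_assoc]
    abel
  have hBrank : B.rank ≤ 2 * r := by
    rw [hBsplit, two_mul]
    refine le_trans (myRankAddLe _ _) (add_le_add ?_ ?_)
    · exact le_trans (Matrix.rank_mul_le_left _ _)
        (le_trans (Matrix.rank_mul_le_left _ _)
          (le_trans (Matrix.rank_le_card_width _) (by simp)))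
    · refine le_trans (Matrix.rank_mul_le_right _ _) ?_
      exact le_trans (Matrix.rank_mul_le_left _ _)
        (le_trans (Matrix.rank_le_card_width _) (by simp))
  -- spectral setup
  set X : Matrix (Fin d₁) (Fin d₂) ℂ := η - B with hX
  set N : Matrix (Fin (d₂ - r)) (Fin (d₂ - r)) ℂ := Mᴴ * M with hN
  have hNh : N.IsHermitian := Matrix.isHermitian_conjTranspose_mul_self M
  set W : Matrix (Fin (d₂ - r)) (Fin (d₂ - r)) ℂ := (hNh.eigenvectorUnitary :
    Matrix (Fin (d₂ - r)) (Fin (d₂ - r)) ℂ) with hW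
  have hWunit : Wᴴ * W = 1 := by
    rw [hW, ← Matrix.star_eq_conjTranspose]
    exact mul_eq_one_comm.mp (Matrix.mem_unitaryGroup_iff.mp (hNh.eigenvectorUnitary).2)
  have hNspec : N = W * Matrix.diagonal (fun i => ((hNh.eigenvalues i : ℝ) : ℂ)) * Wᴴ := by
    rw [hW, ← Matrix.star_eq_conjTranspose]
    have := hNh.spectral_theorem
    simp only [Unitary.conjStarAlgAut_apply, Unitary.coe_star] at this
    exact this
  set Kb : Matrix (Fin d₂) (Fin d₂) ℂ :=
    (Matrix.fromBlocks (1 : Matrix (Fin r) (Fin r) ℂ) 0 0 W).submatrix e₂.symm e₂.symm with hKb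
  set T : Matrix (Fin d₂) (Fin d₂) ℂ := V * Kb with hT
  set g : Fin d₂ → ℝ := fun i => Sum.elim (fun _ => (0:ℝ)) hNh.eigenvalues (e₂.symm i) with hg
  have hTunit : Tᴴ * T = 1 := by
    rw [hT, Matrix.conjTranspose_mul, Matrix.mul_assoc, ← Matrix.mul_assoc Vᴴ, hV, Matrix.one_mul,
      hKb, Matrix.conjTranspose_submatrix,
      Matrix.submatrix_mul_equiv _ _ _ e₂.symm _,
      Matrix.fromBlocks_conjTranspose, Matrix.fromBlocks_multiply]
    simp [hWunit, Matrix.fromBlocks_one]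
  have hXX : Xᴴ * X = T * Matrix.diagonal (fun i => ((g i : ℝ) : ℂ)) * Tᴴ := by
    have hcan : ∀ Z : Matrix (Fin (d₁ - r)) (Fin d₂) ℂ, U₁ᴴ * (U₁ * Z) = Z := by
      intro Z; rw [← Matrix.mul_assoc, hU₁unit, Matrix.one_mul]
    have s1 : Xᴴ * X = V₁ * (N * V₁ᴴ) := by
      rw [hXeq]
      simp only [Matrix.conjTranspose_mul, Matrix.conjTranspose_conjTranspose, Matrix.mul_assoc]
      rw [hcan, ← Matrix.mul_assoc Mᴴ M V₁ᴴ, ← hN]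
    have hfun : (fun i => ((g i : ℝ) : ℂ)) =
        (Sum.elim (fun _ => (0 : ℂ)) (fun j => ((hNh.eigenvalues j : ℝ) : ℂ))) ∘ ⇑e₂.symm := by
      funext i
      rw [hg]
      rcases hsymm : e₂.symm i with a | b <;> simp [hsymm, Function.comp]
    have hDg : Matrix.diagonal (fun i => ((g i : ℝ) : ℂ)) =
        (Matrix.fromBlocks (0 : Matrix (Fin r) (Fin r) ℂ) 0 0
          (Matrix.diagonal (fun j => ((hNh.eigenvalues j : ℝ) : ℂ)))).submatrix
            ⇑e₂.symm ⇑e₂.symm := by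
      rw [show (0 : Matrix (Fin r) (Fin r) ℂ) = Matrix.diagonal (fun _ => (0 : ℂ)) by
            simp [Matrix.diagonal_zero],
        Matrix.fromBlocks_diagonal, Matrix.submatrix_diagonal_equiv, hfun]
    have hmid : Kb * ((Matrix.fromBlocks (0 : Matrix (Fin r) (Fin r) ℂ) 0 0
          (Matrix.diagonal (fun j => ((hNh.eigenvalues j : ℝ) : ℂ)))).submatrix
            ⇑e₂.symm ⇑e₂.symm) * Kbᴴ
        = (Matrix.fromBlocks (0 : Matrix (Fin r) (Fin r) ℂ) 0 0 N).submatrix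
            ⇑e₂.symm ⇑e₂.symm := by
      rw [hKb, Matrix.conjTranspose_submatrix, Matrix.submatrix_mul_equiv,
        Matrix.submatrix_mul_equiv]
      congr 1
      rw [Matrix.fromBlocks_conjTranspose, Matrix.fromBlocks_multiply,
        Matrix.fromBlocks_multiply]
      simp only [Matrix.mul_zero, Matrix.zero_mul, Matrix.mul_one, Matrix.one_mul,
        add_zero, zero_add, Matrix.conjTranspose_zero, Matrix.conjTranspose_one]
      rw [← hNspec]
    have hmid' : ∀ Z : Matrix (Fin d₂) (Fin d₂) ℂ,
        Kb * (((Matrix.fromBlocks (0 : Matrix (Fin r) (Fin r) ℂ) 0 0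
          (Matrix.diagonal (fun j => ((hNh.eigenvalues j : ℝ) : ℂ)))).submatrix
            ⇑e₂.symm ⇑e₂.symm) * (Kbᴴ * Z))
        = ((Matrix.fromBlocks (0 : Matrix (Fin r) (Fin r) ℂ) 0 0 N).submatrix
            ⇑e₂.symm ⇑e₂.symm) * Z := by
      intro Z
      rw [← Matrix.mul_assoc, ← Matrix.mul_assoc, hmid]
    have hVH : Vᴴ = (fromRows V₀ᴴ V₁ᴴ).submatrix ⇑e₂.symm id := by
      rw [← conjTranspose_fromCols_eq_fromRows_conjTranspose, ← hVcols,
        Matrix.conjTranspose_submatrix]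
      ext i j; simp
    have hVe : V = (fromCols V₀ V₁).submatrix id ⇑e₂.symm := by
      rw [← hVcols]
      ext i j; simp
    rw [s1, hT, hDg, Matrix.conjTranspose_mul]
    simp only [Matrix.mul_assoc]
    rw [hmid']
    conv_rhs => rw [hVH]
    conv_rhs => rw [hVe]
    rw [Matrix.submatrix_mul_equiv, Matrix.submatrix_mul_equiv, Matrix.submatrix_id_id,
      ← Matrix.mul_assoc (Matrix.fromCols V₀ V₁), Matrix.fromCols_mul_fromBlocks,
      Matrix.fromCols_mul_fromRows]
    simp [Matrix.mul_assoc]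
  -- sum computation
  have hmult := myEigMultiset (Matrix.isHermitian_conjTranspose_mul_self X) T hTunit g hXX
  have hsum1 : ∑ i, sv X i ^ p = ∑ i, Real.sqrt (g i) ^ p := by
    exact mySumEq _ _ (fun t => Real.sqrt t ^ p) hmult
  have hsum2 : ∑ i, Real.sqrt (g i) ^ p = ∑ j, sv M j ^ p := by
    rw [← Equiv.sum_comp e₂ (fun i => Real.sqrt (g i) ^ p), Fintype.sum_sum_type]
    have hz : ∀ a : Fin r, Real.sqrt (g (e₂ (Sum.inl a))) ^ p = 0 := by
      intro a; rw [hg]; simp [Real.zero_rpow hp0.ne']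
    have he : ∀ j : Fin (d₂ - r), Real.sqrt (g (e₂ (Sum.inr j))) ^ p = sv M j ^ p := by
      intro j; rw [hg]; simp [sv]
    simp only [hz, he, Finset.sum_const_zero, zero_add]
  have hfinal : (∑ i, sv (η - η2r) i ^ p) ≤ ∑ j, sv M j ^ p := by
    rw [← hsum2, ← hsum1, hX]
    exact hbest B hBrank
  exact hfinal
end
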